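/- Let G^σ be a connected k-uniform oriented hypergraph with k even. Then the following are equivalent: (a) the induced signed hypergraph ΓG^σ is switching equivalent to ΓG^+; (b) S A(ΓG^σ) S = -A(G) for some signature matrix S; (c) S L(ΓG^σ) S = L(G) for some signature matrix S; (d) 0 is an H-eigenvalue of L(ΓG^σ). -/

import Mathlib

open BigOperators

variable {V : Type*}

/-- The adjacency tensor of a signed `k`-uniform hypergraph with edge set `E` and edge signs
`γ`: the entry at a tuple whose underlying vertex set is an edge `e` is `γ(e)/(k-1)!`,
and all other entries are `0`. -/
noncomputable def adjT (R : Type*) [Field R] [Fintype V] [DecidableEq V] (k : ℕ)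
    (E : Finset (Finset V)) (γ : Finset V → R) : (Fin k → V) → R :=
  fun i => if Finset.image i Finset.univ ∈ E
    then γ (Finset.image i Finset.univ) / (Nat.factorial (k - 1) : R) else 0

/-- `(lam, x)` is an eigenpair of the order-`k` tensor `A`:
`x ≠ 0` and `(A x^{k-1})_v = lam * x_v^{k-1}` for every `v`. -/
def IsTensorEigenpair (R : Type*) [CommRing R] [Fintype V] [DecidableEq V] (k : ℕ) [NeZero k]
    (A : (Fin k → V) → R) (lam : R) (x : V → R) : Prop :=
  x ≠ 0 ∧ ∀ v : V,
    (∑ i : Fin k → V, if i 0 = v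
      then A i * ∏ j ∈ Finset.univ.filter (fun j : Fin k => j ≠ 0), x (i j) else 0)
    = lam * x v ^ (k - 1)

/-- The spectral radius of a real order-`k` tensor: the supremum of the moduli of its
(complex) eigenvalues. -/
noncomputable def tSpecRad [Fintype V] [DecidableEq V] (k : ℕ) [NeZero k]
    (A : (Fin k → V) → ℝ) : ℝ :=
  sSup {r | ∃ lam : ℂ,
    (∃ x : V → ℂ, IsTensorEigenpair ℂ k (fun i => ((A i : ℝ) : ℂ)) lam x) ∧
      r = ‖lam‖}

/-- One vertex switching on a signed hypergraph: negate the sign of every edge containing `w`. -/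
def VSwitchStep [DecidableEq V] (γ δ : Finset V → ℝ) : Prop :=
  ∃ w : V, ∀ e, δ e = if w ∈ e then -γ e else γ e

/-- Two signed hypergraphs (with common edge set `E`) are switching equivalent if one is
obtained from the other by a finite sequence of vertex switchings (signs off `E` are
irrelevant). -/
def SignedSwitchEquiv [DecidableEq V] (E : Finset (Finset V)) (γ γ' : Finset V → ℝ) : Prop :=
  ∃ δ, Relation.ReflTransGen VSwitchStep γ δ ∧ ∀ e ∈ E, δ e = γ' e

/-- The action `S T S` of a signature matrix (diagonal ±1 matrix) `S` on an order-`k` tensor: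
`(S T S)_{i_1…i_k} = S_{i_1 i_1} t_{i_1…i_k} S_{i_2 i_2} ⋯ S_{i_k i_k}`. -/
def conjT (R : Type*) [CommRing R] [DecidableEq V] (k : ℕ) [NeZero k] [Fintype V]
    (S : V → R) (A : (Fin k → V) → R) : (Fin k → V) → R :=
  fun i => S (i 0) * A i * ∏ j ∈ Finset.univ.filter (fun j : Fin k => j ≠ 0), S (i j)

/-- The diagonal degree tensor `D(G)` of the hypergraph with edge set `E`:
`d_{v…v} = deg v`, all other entries `0`. -/
noncomputable def degT [Fintype V] [DecidableEq V] (k : ℕ) [NeZero k]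
    (E : Finset (Finset V)) : (Fin k → V) → ℝ :=
  fun i => if ∀ j, i j = i 0 then ((E.filter fun e => i 0 ∈ e).card : ℝ) else 0

/-- The Laplacian tensor `L(Γ) = D(G) + A(Γ)` of a signed `k`-uniform hypergraph. -/
noncomputable def lapT [Fintype V] [DecidableEq V] (k : ℕ) [NeZero k]
    (E : Finset (Finset V)) (γ : Finset V → ℝ) : (Fin k → V) → ℝ :=
  fun i => degT k E i + adjT ℝ k E γ i

/-- `σ` is an incidence orientation of the hypergraph with edge set `E`: each incidence
`(e, v)` with `v ∈ e ∈ E` is labeled `+1` or `-1`. -/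
def IsIncidenceOrientation (E : Finset (Finset V)) (σ : Finset V → V → ℝ) : Prop :=
  ∀ e ∈ E, ∀ v ∈ e, σ e v = 1 ∨ σ e v = -1

/-- The edge signs of the signed hypergraph `ΓG^σ` induced by an orientation `σ`:
`sgn_σ(e) = (-1)^{|e|-1} ∏_{v ∈ e} σ(e,v)` (for `k`-uniform edges, `|e| = k`). -/
def inducedSign [DecidableEq V] (k : ℕ) (σ : Finset V → V → ℝ) : Finset V → ℝ :=
  fun e => (-1 : ℝ) ^ (k - 1) * ∏ v ∈ e, σ e v

/-- The incidence graph of the hypergraph with edge set `E`. -/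
def hIncGraph [DecidableEq V] (E : Finset (Finset V)) : SimpleGraph (V ⊕ {e // e ∈ E}) where
  Adj x y := (∃ v e, x = Sum.inl v ∧ y = Sum.inr e ∧ v ∈ e.1) ∨
             (∃ v e, x = Sum.inr e ∧ y = Sum.inl v ∧ v ∈ e.1)
  symm := by
    constructor
    rintro x y (⟨v, e, h1, h2, h3⟩ | ⟨v, e, h1, h2, h3⟩)
    · exact Or.inr ⟨v, e, h2, h1, h3⟩
    · exact Or.inl ⟨v, e, h2, h1, h3⟩
  loopless := by
    constructor
    rintro x (⟨v, e, h1, h2, h3⟩ | ⟨v, e, h1, h2, h3⟩) <;> subst h1 <;> simp at h2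

/-- A hypergraph is connected if any two elements of `V ∪ E` are joined by a walk. -/
def HConnectedF [DecidableEq V] (E : Finset (Finset V)) : Prop := (hIncGraph E).Connected

section SwitchHelpers
set_option linter.unusedSectionVars false
variable [Fintype V] [DecidableEq V]

lemma filter_ne0 (k : ℕ) [NeZero k] :
    (Finset.univ.filter (fun j : Fin k => j ≠ 0)) = Finset.univ.erase 0 :=
  Finset.filter_ne' _ _

lemma card_filter_ne0 (k : ℕ) [NeZero k] :
    (Finset.univ.filter (fun j : Fin k => j ≠ 0)).card = k - 1 := by
  rw [filter_ne0, Finset.card_erase_of_mem (Finset.mem_univ _), Finset.card_univ,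
    Fintype.card_fin]

lemma tuple_inj {k : ℕ} {i : Fin k → V} {e : Finset V} (he : e.card = k)
    (him : Finset.image i Finset.univ = e) : Function.Injective i := by
  have h : (Finset.univ.image i).card = (Finset.univ : Finset (Fin k)).card := by
    rw [him, he, Finset.card_univ, Fintype.card_fin]
  have h2 := Finset.card_image_iff.mp h
  rw [Finset.coe_univ] at h2
  exact Set.injOn_univ.mp h2

lemma card_tuples (k : ℕ) [NeZero k] (e : Finset V) (he : e.card = k) (v : V) (hv : v ∈ e) :
    (Finset.univ.filter
        (fun i : Fin k → V => i 0 = v ∧ Finset.image i Finset.univ = e)).card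
      = Nat.factorial (k - 1) := by
  classical
  rw [← Fintype.card_subtype]
  set P : (Fin k → V) → Prop := fun i => i 0 = v ∧ Finset.image i Finset.univ = e with hP
  let F : ({j : Fin k // j ≠ 0} ≃ {u : V // u ∈ e.erase v}) → (Fin k → V) :=
    fun g j => if h : j = 0 then v else (g ⟨j, h⟩ : V)
  have hF : ∀ g, P (F g) := by
    intro g
    constructor
    · simp [F]
    · apply Finset.Subset.antisymm
      · intro u hu
        simp only [Finset.mem_image] at hu
        obtain ⟨j, -, rfl⟩ := hu
        by_cases h : j = 0
        · simpa [F, h] using hv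
        · simp only [F, dif_neg h]
          exact Finset.mem_of_mem_erase (g ⟨j, h⟩).2
      · intro u hu
        by_cases huv : u = v
        · subst huv; exact Finset.mem_image.mpr ⟨0, Finset.mem_univ _, by simp [F]⟩
        · obtain ⟨j, hj⟩ := g.surjective ⟨u, Finset.mem_erase.mpr ⟨huv, hu⟩⟩
          refine Finset.mem_image.mpr ⟨j.1, Finset.mem_univ _, ?_⟩
          simp only [F, dif_neg j.2]
          rw [Subtype.coe_eta, hj]
  have hinj : Function.Injective (fun g => (⟨F g, hF g⟩ : {i : Fin k → V // P i})) := by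
    intro g g' hgg'
    refine Equiv.ext fun j => Subtype.ext ?_
    have h := congrFun (congrArg Subtype.val hgg') j.1
    simpa [F, dif_neg j.2, Subtype.coe_eta] using h
  have hcard : Fintype.card {j : Fin k // j ≠ 0} = Fintype.card {u : V // u ∈ e.erase v} := by
    have h1 : Fintype.card {j : Fin k // j ≠ 0} = k - 1 := by
      rw [Fintype.card_subtype_compl, Fintype.card_subtype_eq, Fintype.card_fin]
    have h2 : Fintype.card {u : V // u ∈ e.erase v} = k - 1 := by
      rw [Fintype.card_coe, Finset.card_erase_of_mem hv, he]
    rw [h1, h2]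
  have hsurj : Function.Surjective
      (fun g => (⟨F g, hF g⟩ : {i : Fin k → V // P i})) := by
    rintro ⟨i, hi0, him⟩
    have hinj_i := tuple_inj he him
    have hmem : ∀ j : {j : Fin k // j ≠ 0}, i j.1 ∈ e.erase v := by
      intro j
      refine Finset.mem_erase.mpr ⟨?_, ?_⟩
      · intro hcontra; exact j.2 (hinj_i (by rw [hcontra, hi0]))
      · rw [← him]; exact Finset.mem_image_of_mem _ (Finset.mem_univ _)
    set g0 : {j : Fin k // j ≠ 0} → {u : V // u ∈ e.erase v} :=
      fun j => ⟨i j.1, hmem j⟩ with hg0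
    have hg0inj : Function.Injective g0 := by
      intro a b hab
      exact Subtype.ext (hinj_i (congrArg Subtype.val hab))
    have hg0bij : Function.Bijective g0 :=
      (Fintype.bijective_iff_injective_and_card g0).mpr ⟨hg0inj, hcard⟩
    refine ⟨Equiv.ofBijective g0 hg0bij, ?_⟩
    apply Subtype.ext
    funext j
    by_cases h : j = 0
    · subst h; simpa [F] using hi0.symm
    · simp only [F, dif_neg h]
      rfl
  calc Fintype.card {i : Fin k → V // P i}
      = Fintype.card ({j : Fin k // j ≠ 0} ≃ {u : V // u ∈ e.erase v}) :=
        (Fintype.card_of_bijective ⟨hinj, hsurj⟩).symm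
    _ = (Fintype.card {j : Fin k // j ≠ 0}).factorial :=
        Fintype.card_equiv (Fintype.equivOfCardEq hcard)
    _ = Nat.factorial (k - 1) := by
        rw [Fintype.card_subtype_compl, Fintype.card_subtype_eq, Fintype.card_fin]

lemma exists_tuple (k : ℕ) [NeZero k] (e : Finset V) (he : e.card = k) (v : V) (hv : v ∈ e) :
    ∃ i : Fin k → V, i 0 = v ∧ Finset.image i Finset.univ = e := by
  have h := card_tuples k e he v hv
  have hpos : 0 < (Finset.univ.filter
      (fun i : Fin k → V => i 0 = v ∧ Finset.image i Finset.univ = e)).card := by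
    rw [h]; exact Nat.factorial_pos _
  obtain ⟨i, hi⟩ := Finset.card_pos.mp hpos
  simp only [Finset.mem_filter, Finset.mem_univ, true_and] at hi
  exact ⟨i, hi⟩

lemma sum_tuples (k : ℕ) [NeZero k] (e : Finset V) (he : e.card = k) (v : V) (hv : v ∈ e)
    (f : V → ℝ) :
    (∑ i : Fin k → V, if i 0 = v ∧ Finset.image i Finset.univ = e
        then ∏ j ∈ Finset.univ.filter (fun j : Fin k => j ≠ 0), f (i j) else 0)
      = (Nat.factorial (k - 1) : ℝ) * ∏ u ∈ e.erase v, f u := by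
  classical
  rw [← Finset.sum_filter]
  have hconst : ∀ i ∈ Finset.univ.filter
      (fun i : Fin k → V => i 0 = v ∧ Finset.image i Finset.univ = e),
      (∏ j ∈ Finset.univ.filter (fun j : Fin k => j ≠ 0), f (i j))
        = ∏ u ∈ e.erase v, f u := by
    intro i hi
    simp only [Finset.mem_filter, Finset.mem_univ, true_and] at hi
    obtain ⟨hi0, him⟩ := hi
    have hinj := tuple_inj he him
    rw [filter_ne0]
    have himg : (Finset.univ.erase (0 : Fin k)).image i = e.erase v := by
      rw [Finset.image_erase hinj, him, hi0]
    rw [← himg, Finset.prod_image (fun a _ b _ hab => hinj hab)]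
  rw [Finset.sum_congr rfl hconst, Finset.sum_const, card_tuples k e he v hv,
    nsmul_eq_mul]

lemma switch_chain_sign (γ δ : Finset V → ℝ) (h : Relation.ReflTransGen VSwitchStep γ δ) :
    ∃ S : V → ℝ, (∀ v, S v = 1 ∨ S v = -1) ∧ ∀ e : Finset V, δ e = γ e * ∏ v ∈ e, S v := by
  induction h with
  | refl => exact ⟨fun _ => 1, fun _ => Or.inl rfl, fun e => by simp⟩
  | tail hab hbc ih =>
    obtain ⟨S, hS, hδ⟩ := ih
    obtain ⟨w, hw⟩ := hbc
    refine ⟨fun v => if v = w then -S v else S v, ?_, ?_⟩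
    · intro v
      by_cases h : v = w
      · subst h
        rcases hS v with h' | h' <;> simp [h']
      · simpa [h] using hS v
    · intro e
      rw [hw e, hδ e]
      beta_reduce
      by_cases hwe : w ∈ e
      · rw [if_pos hwe, ← Finset.mul_prod_erase e (fun v => if v = w then -S v else S v) hwe,
          ← Finset.mul_prod_erase e S hwe]
        have hrest : ∀ u ∈ e.erase w, (if u = w then -S u else S u) = S u := by
          intro u hu; rw [if_neg (Finset.ne_of_mem_erase hu)]
        rw [Finset.prod_congr rfl hrest, if_pos rfl]
        ring
      · rw [if_neg hwe]
        congr 1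
        apply Finset.prod_congr rfl
        intro u hu
        rw [if_neg]
        rintro rfl
        exact hwe hu

lemma chain_of_finset (γ : Finset V → ℝ) (T : Finset V) :
    Relation.ReflTransGen VSwitchStep γ
      (fun e => γ e * ∏ v ∈ e, (if v ∈ T then (-1 : ℝ) else 1)) := by
  classical
  induction T using Finset.induction_on with
  | empty =>
    have h : (fun e : Finset V => γ e * ∏ v ∈ e, (if v ∈ (∅ : Finset V) then (-1 : ℝ) else 1))
        = γ := by
      funext e; simp
    rw [h]
  | @insert w T hw ih =>
    refine ih.tail ⟨w, fun e => ?_⟩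
    beta_reduce
    by_cases hwe : w ∈ e
    · rw [if_pos hwe,
        ← Finset.mul_prod_erase e (fun v => if v ∈ insert w T then (-1 : ℝ) else 1) hwe,
        ← Finset.mul_prod_erase e (fun v => if v ∈ T then (-1 : ℝ) else 1) hwe]
      have hrest : ∀ u ∈ e.erase w,
          (if u ∈ insert w T then (-1 : ℝ) else 1) = (if u ∈ T then (-1 : ℝ) else 1) := by
        intro u hu
        have hne := Finset.ne_of_mem_erase hu
        simp [Finset.mem_insert, hne]
      rw [Finset.prod_congr rfl hrest, if_pos (Finset.mem_insert_self w T), if_neg hw]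
      ring
    · rw [if_neg hwe]
      congr 1
      apply Finset.prod_congr rfl
      intro u hu
      have hne : u ≠ w := by rintro rfl; exact hwe hu
      simp [Finset.mem_insert, hne]

lemma switchEquiv_iff_sign (E : Finset (Finset V)) (γ γ' : Finset V → ℝ) :
    SignedSwitchEquiv E γ γ' ↔
      ∃ S : V → ℝ, (∀ v, S v = 1 ∨ S v = -1) ∧ ∀ e ∈ E, γ' e = γ e * ∏ v ∈ e, S v := by
  constructor
  · rintro ⟨δ, hchain, hδ⟩
    obtain ⟨S, hS, hall⟩ := switch_chain_sign γ δ hchain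
    exact ⟨S, hS, fun e he => by rw [← hδ e he, hall e]⟩
  · rintro ⟨S, hS, hall⟩
    classical
    refine ⟨fun e => γ e * ∏ v ∈ e, (if v ∈ Finset.univ.filter (fun v => S v = -1) then (-1 : ℝ) else 1),
      chain_of_finset γ _, ?_⟩
    intro e he
    beta_reduce
    rw [hall e he]
    congr 1
    apply Finset.prod_congr rfl
    intro u _
    rcases hS u with h | h <;> norm_num [h]

lemma lap_apply (k : ℕ) [NeZero k] (E : Finset (Finset V)) (hE : ∀ e ∈ E, e.card = k)
    (γ : Finset V → ℝ) (f : V → ℝ) (v : V) :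
    (∑ i : Fin k → V, if i 0 = v
        then lapT k E γ i * ∏ j ∈ Finset.univ.filter (fun j : Fin k => j ≠ 0), f (i j) else 0)
      = ((E.filter (fun e => v ∈ e)).card : ℝ) * f v ^ (k - 1)
        + ∑ e ∈ E.filter (fun e => v ∈ e), γ e * ∏ u ∈ e.erase v, f u := by
  classical
  have hsplit : ∀ i : Fin k → V,
      (if i 0 = v then lapT k E γ i
          * ∏ j ∈ Finset.univ.filter (fun j : Fin k => j ≠ 0), f (i j) else 0)
      = (if i 0 = v then degT k E i
          * ∏ j ∈ Finset.univ.filter (fun j : Fin k => j ≠ 0), f (i j) else 0)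
        + (if i 0 = v then adjT ℝ k E γ i
          * ∏ j ∈ Finset.univ.filter (fun j : Fin k => j ≠ 0), f (i j) else 0) := by
    intro i; by_cases h : i 0 = v <;> simp [h, lapT, add_mul]
  rw [Finset.sum_congr rfl (fun i _ => hsplit i), Finset.sum_add_distrib]
  congr 1
  · -- degree part
    rw [Finset.sum_eq_single (fun _ => v)]
    · have h1 : degT k E (fun _ : Fin k => v) = ((E.filter (fun e => v ∈ e)).card : ℝ) := by
        simp [degT]
      rw [if_pos rfl, h1, Finset.prod_const, card_filter_ne0]
    · intro i _ hne
      by_cases h0 : i 0 = v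
      · have hnd : ¬ (∀ j, i j = i 0) := by
          intro hall; apply hne; funext j; rw [hall j, h0]
        have hz : degT k E i = 0 := by
          rw [degT, if_neg hnd]
        simp [h0, hz]
      · simp [h0]
    · intro h; exact absurd (Finset.mem_univ _) h
  · -- adjacency part
    have step1 : ∀ i : Fin k → V,
        (if i 0 = v then adjT ℝ k E γ i
            * ∏ j ∈ Finset.univ.filter (fun j : Fin k => j ≠ 0), f (i j) else 0)
        = ∑ e ∈ E, (if i 0 = v ∧ Finset.image i Finset.univ = e
            then γ e / (Nat.factorial (k - 1) : ℝ)
              * ∏ j ∈ Finset.univ.filter (fun j : Fin k => j ≠ 0), f (i j) else 0) := by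
      intro i
      by_cases h0 : i 0 = v
      · by_cases hiE : Finset.image i Finset.univ ∈ E
        · rw [Finset.sum_eq_single (Finset.image i Finset.univ)]
          · rw [if_pos h0, if_pos ⟨h0, rfl⟩]
            simp [adjT, hiE]
          · intro e he hne
            rw [if_neg]; rintro ⟨-, h⟩; exact hne h.symm
          · intro h; exact absurd hiE h
        · rw [if_pos h0]
          have hz : adjT ℝ k E γ i = 0 := by simp [adjT, hiE]
          rw [hz, zero_mul]
          symm
          apply Finset.sum_eq_zero
          intro e he
          rw [if_neg]; rintro ⟨-, rfl⟩; exact hiE he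
      · rw [if_neg h0]
        symm
        apply Finset.sum_eq_zero
        intro e _
        rw [if_neg]; rintro ⟨h, -⟩; exact h0 h
    rw [Finset.sum_congr rfl (fun i _ => step1 i), Finset.sum_comm]
    have step2 : ∀ e ∈ E, (∑ i : Fin k → V, if i 0 = v ∧ Finset.image i Finset.univ = e
        then γ e / (Nat.factorial (k - 1) : ℝ)
          * ∏ j ∈ Finset.univ.filter (fun j : Fin k => j ≠ 0), f (i j) else 0)
        = if v ∈ e then γ e * ∏ u ∈ e.erase v, f u else 0 := by
      intro e he
      by_cases hv : v ∈ e
      · rw [if_pos hv]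
        have hpull : (∑ i : Fin k → V, if i 0 = v ∧ Finset.image i Finset.univ = e
            then γ e / (Nat.factorial (k - 1) : ℝ)
              * ∏ j ∈ Finset.univ.filter (fun j : Fin k => j ≠ 0), f (i j) else 0)
            = γ e / (Nat.factorial (k - 1) : ℝ)
              * ∑ i : Fin k → V, (if i 0 = v ∧ Finset.image i Finset.univ = e
                then ∏ j ∈ Finset.univ.filter (fun j : Fin k => j ≠ 0), f (i j) else 0) := by
          rw [Finset.mul_sum]
          apply Finset.sum_congr rfl
          intro i _
          by_cases h : i 0 = v ∧ Finset.image i Finset.univ = e <;> simp [h]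
        rw [hpull, sum_tuples k e (hE e he) v hv f]
        have hfac : ((Nat.factorial (k - 1) : ℕ) : ℝ) ≠ 0 :=
          Nat.cast_ne_zero.mpr (Nat.factorial_ne_zero _)
        field_simp
      · rw [if_neg hv]
        apply Finset.sum_eq_zero
        intro i _
        rw [if_neg]
        rintro ⟨h0, rfl⟩
        exact hv (h0 ▸ Finset.mem_image_of_mem i (Finset.mem_univ 0))
    rw [Finset.sum_congr rfl step2, ← Finset.sum_filter]

lemma sign_prod_tuple (k : ℕ) [NeZero k] {i : Fin k → V} {e : Finset V}
    (he : e.card = k) (him : Finset.image i Finset.univ = e) (S : V → ℝ) :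
    S (i 0) * ∏ j ∈ Finset.univ.filter (fun j : Fin k => j ≠ 0), S (i j)
      = ∏ v ∈ e, S v := by
  have hinj := tuple_inj he him
  rw [filter_ne0, Finset.mul_prod_erase Finset.univ (fun j => S (i j)) (Finset.mem_univ 0),
    ← him, Finset.prod_image (fun a _ b _ hab => hinj hab)]

lemma conjT_adj_eq_iff (k : ℕ) [NeZero k] (E : Finset (Finset V))
    (hE : ∀ e ∈ E, e.card = k) (γ : Finset V → ℝ) (S : V → ℝ)
    (hS : ∀ v, S v = 1 ∨ S v = -1) :
    conjT ℝ k S (adjT ℝ k E γ) = (fun i => -(adjT ℝ k E (fun _ => 1) i)) ↔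
      ∀ e ∈ E, γ e * ∏ v ∈ e, S v = -1 := by
  have hfac : ((Nat.factorial (k - 1) : ℕ) : ℝ) ≠ 0 :=
    Nat.cast_ne_zero.mpr (Nat.factorial_ne_zero _)
  constructor
  · intro h e he
    have hkpos : 0 < e.card := by rw [hE e he]; exact k.pos_of_neZero
    obtain ⟨v, hv⟩ := Finset.card_pos.mp hkpos
    obtain ⟨i, hi0, him⟩ := exists_tuple k e (hE e he) v hv
    have hi := congrFun h i
    rw [conjT] at hi
    simp only [adjT, him, he, if_pos] at hi
    -- hi : S (i 0) * (γ e / c) * ∏ = -(1 / c)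
    have h2 : (γ e * ∏ v ∈ e, S v) / (Nat.factorial (k - 1) : ℝ)
        = -(1 / (Nat.factorial (k - 1) : ℝ)) := by
      rw [← hi, ← sign_prod_tuple k (hE e he) him S]
      ring
    field_simp at h2
    linarith
  · intro h
    funext i
    show S (i 0) * adjT ℝ k E γ i * _ = _
    by_cases him : Finset.image i Finset.univ ∈ E
    · rw [adjT, if_pos him, adjT, if_pos him]
      have hkey := h _ him
      have hp := sign_prod_tuple k (hE _ him) rfl S
      calc S (i 0) * (γ (Finset.image i Finset.univ) / (Nat.factorial (k - 1) : ℝ))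
            * ∏ j ∈ Finset.univ.filter (fun j : Fin k => j ≠ 0), S (i j)
          = (γ (Finset.image i Finset.univ) * (S (i 0)
              * ∏ j ∈ Finset.univ.filter (fun j : Fin k => j ≠ 0), S (i j)))
            / (Nat.factorial (k - 1) : ℝ) := by ring
        _ = -(1 / (Nat.factorial (k - 1) : ℝ)) := by rw [hp, hkey]; ring
    · rw [adjT, if_neg him, adjT, if_neg him]
      ring

lemma conjT_deg (k : ℕ) [NeZero k] (hk : Even k) (E : Finset (Finset V)) (S : V → ℝ)
    (hS : ∀ v, S v = 1 ∨ S v = -1) (i : Fin k → V) :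
    conjT ℝ k S (degT k E) i = degT k E i := by
  by_cases hd : ∀ j, i j = i 0
  · have hprod : (∏ j ∈ Finset.univ.filter (fun j : Fin k => j ≠ 0), S (i j))
        = S (i 0) ^ (k - 1) := by
      rw [Finset.prod_congr rfl (fun j _ => by rw [hd j]), Finset.prod_const,
        card_filter_ne0]
    have hpow : S (i 0) * S (i 0) ^ (k - 1) = 1 := by
      have : S (i 0) * S (i 0) ^ (k - 1) = S (i 0) ^ k := by
        rw [← pow_succ', Nat.sub_add_cancel (Nat.one_le_iff_ne_zero.mpr (NeZero.ne k))]
      rw [this]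
      rcases hS (i 0) with h | h <;> rw [h]
      · exact one_pow k
      · exact hk.neg_one_pow
    rw [conjT, hprod]
    calc S (i 0) * degT k E i * S (i 0) ^ (k - 1)
        = degT k E i * (S (i 0) * S (i 0) ^ (k - 1)) := by ring
      _ = degT k E i := by rw [hpow, mul_one]
  · have hz : degT k E i = 0 := by rw [degT, if_neg hd]
    rw [conjT, hz]
    ring

lemma conjT_lap_eq_iff (k : ℕ) [NeZero k] (hk : Even k) (E : Finset (Finset V))
    (γ : Finset V → ℝ) (S : V → ℝ) (hS : ∀ v, S v = 1 ∨ S v = -1) :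
    conjT ℝ k S (lapT k E γ) = (fun i => degT k E i - adjT ℝ k E (fun _ => 1) i) ↔
      conjT ℝ k S (adjT ℝ k E γ) = (fun i => -(adjT ℝ k E (fun _ => 1) i)) := by
  have hsplit : ∀ i, conjT ℝ k S (lapT k E γ) i
      = conjT ℝ k S (degT k E) i + conjT ℝ k S (adjT ℝ k E γ) i := by
    intro i
    simp only [conjT, lapT]
    ring
  constructor
  · intro h
    funext i
    have hi := congrFun h i
    rw [hsplit i, conjT_deg k hk E S hS i] at hi
    have : degT k E i + conjT ℝ k S (adjT ℝ k E γ) i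
        = degT k E i - adjT ℝ k E (fun _ => 1) i := hi
    linarith [this]
  · intro h
    funext i
    rw [hsplit i, conjT_deg k hk E S hS i, congrFun h i]
    ring

lemma sign_to_eig (k : ℕ) [NeZero k] (hk : Even k) (E : Finset (Finset V))
    (hE : ∀ e ∈ E, e.card = k) (hconn : HConnectedF E) (γ : Finset V → ℝ)
    (S : V → ℝ) (hS : ∀ v, S v = 1 ∨ S v = -1)
    (hP : ∀ e ∈ E, γ e * ∏ v ∈ e, S v = -1) :
    IsTensorEigenpair ℝ k (lapT k E γ) 0 S := by
  have hV : Nonempty V := by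
    obtain ⟨a⟩ := (show (hIncGraph E).Connected from hconn).nonempty
    cases a with
    | inl v => exact ⟨v⟩
    | inr e =>
      have h1 : e.1.card = k := hE e.1 e.2
      have h2 : e.1.Nonempty :=
        Finset.card_pos.mp (by rw [h1]; exact k.pos_of_neZero)
      exact ⟨h2.choose⟩
  have hodd : Odd (k - 1) := Nat.Even.sub_odd NeZero.one_le hk odd_one
  constructor
  · intro h
    obtain ⟨v⟩ := hV
    have := congrFun h v
    rcases hS v with h' | h' <;> rw [h'] at this <;> norm_num at this
  · intro v
    rw [lap_apply k E hE γ S v]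
    have hmul : ∀ v, S v * S v = 1 := by
      intro u; rcases hS u with h | h <;> rw [h] <;> norm_num
    have hterm : ∀ e ∈ E.filter (fun e => v ∈ e),
        γ e * ∏ u ∈ e.erase v, S u = -S v := by
      intro e he
      obtain ⟨heE, hve⟩ := Finset.mem_filter.mp he
      have herase : (∏ u ∈ e.erase v, S u) = S v * ∏ u ∈ e, S u := by
        rw [← Finset.mul_prod_erase e S hve, ← mul_assoc, hmul v, one_mul]
      rw [herase, ← mul_assoc, mul_comm (γ e) (S v), mul_assoc, hP e heE]
      ring
    rw [Finset.sum_congr rfl hterm, Finset.sum_const, nsmul_eq_mul]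
    have hSpow : S v ^ (k - 1) = S v := by
      rcases hS v with h | h <;> rw [h]
      · exact one_pow _
      · exact hodd.neg_one_pow
    rw [hSpow]
    ring

lemma eig_to_sign (k : ℕ) [NeZero k] (hk : Even k) (E : Finset (Finset V))
    (hE : ∀ e ∈ E, e.card = k) (hconn : HConnectedF E) (γ : Finset V → ℝ)
    (habs : ∀ e ∈ E, |γ e| = 1) (x : V → ℝ)
    (hx : IsTensorEigenpair ℝ k (lapT k E γ) 0 x) :
    ∃ S : V → ℝ, (∀ v, S v = 1 ∨ S v = -1) ∧ ∀ e ∈ E, γ e * ∏ v ∈ e, S v = -1 := by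
  classical
  obtain ⟨hx0, heig⟩ := hx
  have hV : Nonempty V := by
    by_contra h
    exact hx0 (funext fun v => absurd ⟨v⟩ h)
  haveI := hV
  set m := Finset.univ.sup' Finset.univ_nonempty (fun v => |x v|) with hm
  have hle : ∀ v, |x v| ≤ m := fun v => by
    rw [hm]; exact Finset.le_sup' (fun v => |x v|) (Finset.mem_univ v)
  have hmpos : 0 < m := by
    obtain ⟨v, hv⟩ := Function.ne_iff.mp hx0
    have : (0 : ℝ) < |x v| := abs_pos.mpr hv
    linarith [hle v]
  have hk1 : k - 1 + 1 = k := Nat.sub_add_cancel NeZero.one_le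
  -- key claim
  have key : ∀ v : V, |x v| = m → ∀ e ∈ E, v ∈ e → γ e * ∏ u ∈ e, x u = -m ^ k := by
    intro v hvm e heE hve
    have h1 := heig v
    rw [lap_apply k E hE γ x v, zero_mul] at h1
    set s := E.filter (fun e => v ∈ e) with hs
    have hxk : x v ^ k = m ^ k := by
      rcases abs_eq (le_of_lt hmpos) |>.mp hvm with h | h
      · rw [h]
      · rw [h, hk.neg_pow]
    have hsum2 : ∑ e ∈ s, -(γ e * ∏ u ∈ e, x u) = ∑ e ∈ s, m ^ k := by
      have hmul : ∀ e ∈ s, x v * (γ e * ∏ u ∈ e.erase v, x u) = γ e * ∏ u ∈ e, x u := by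
        intro e hes
        have hve' : v ∈ e := (Finset.mem_filter.mp hes).2
        rw [← Finset.mul_prod_erase e x hve']
        ring
      have h2 : ∑ e ∈ s, γ e * ∏ u ∈ e, x u = -((s.card : ℝ) * m ^ k) := by
        calc ∑ e ∈ s, γ e * ∏ u ∈ e, x u
            = ∑ e ∈ s, x v * (γ e * ∏ u ∈ e.erase v, x u) :=
              (Finset.sum_congr rfl hmul).symm
          _ = x v * ∑ e ∈ s, γ e * ∏ u ∈ e.erase v, x u := by rw [Finset.mul_sum]
          _ = x v * (-((s.card : ℝ) * x v ^ (k - 1))) := by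
              congr 1
              linarith [h1]
          _ = -((s.card : ℝ) * (x v * x v ^ (k - 1))) := by ring
          _ = -((s.card : ℝ) * x v ^ k) := by rw [← pow_succ', hk1]
          _ = -((s.card : ℝ) * m ^ k) := by rw [hxk]
      rw [Finset.sum_neg_distrib, h2, Finset.sum_const, nsmul_eq_mul]
      ring
    have hbound : ∀ e ∈ s, -(γ e * ∏ u ∈ e, x u) ≤ m ^ k := by
      intro e hes
      obtain ⟨heE', hve'⟩ := Finset.mem_filter.mp hes
      have habs' : |γ e * ∏ u ∈ e, x u| ≤ m ^ k := by
        rw [abs_mul, habs e heE', one_mul, Finset.abs_prod]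
        calc ∏ u ∈ e, |x u| ≤ ∏ u ∈ e, m :=
              Finset.prod_le_prod (fun u _ => abs_nonneg _) (fun u _ => hle u)
          _ = m ^ k := by rw [Finset.prod_const, hE e heE']
      linarith [neg_abs_le (γ e * ∏ u ∈ e, x u), abs_le.mp habs']
    have hall := (Finset.sum_eq_sum_iff_of_le hbound).mp hsum2
    have := hall e (Finset.mem_filter.mpr ⟨heE, hve⟩)
    linarith [this]
  -- equal moduli within an edge
  have key2 : ∀ e ∈ E, γ e * ∏ u ∈ e, x u = -m ^ k → ∀ u ∈ e, |x u| = m := by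
    intro e heE hprod u0 hu0
    have habsprod : ∏ u ∈ e, |x u| = m ^ k := by
      have h1 : |γ e * ∏ u ∈ e, x u| = m ^ k := by
        rw [hprod, abs_neg, abs_pow, abs_of_pos hmpos]
      rw [abs_mul, habs e heE, one_mul, Finset.abs_prod] at h1
      exact h1
    have hrest : ∏ u ∈ e.erase u0, |x u| ≤ m ^ (k - 1) := by
      calc ∏ u ∈ e.erase u0, |x u| ≤ ∏ u ∈ e.erase u0, m :=
            Finset.prod_le_prod (fun u _ => abs_nonneg _) (fun u _ => hle u)
        _ = m ^ (k - 1) := by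
            rw [Finset.prod_const, Finset.card_erase_of_mem hu0, hE e heE]
    have hsplit : |x u0| * ∏ u ∈ e.erase u0, |x u| = m ^ k := by
      rw [Finset.mul_prod_erase e (fun u => |x u|) hu0]
      exact habsprod
    have hge : m ≤ |x u0| := by
      have h2 : m ^ k ≤ |x u0| * m ^ (k - 1) := by
        rw [← hsplit]
        exact mul_le_mul_of_nonneg_left hrest (abs_nonneg _)
      have h3 : m * m ^ (k - 1) ≤ |x u0| * m ^ (k - 1) := by
        rw [← pow_succ', hk1]
        exact h2
      exact le_of_mul_le_mul_right h3 (pow_pos hmpos _)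
    exact le_antisymm (hle u0) hge
  -- propagation
  let R : V ⊕ {e // e ∈ E} → Prop :=
    Sum.elim (fun v => |x v| = m) (fun e => ∀ u ∈ e.1, |x u| = m)
  have hstep : ∀ a b, (hIncGraph E).Adj a b → R a → R b := by
    rintro a b (⟨v, e, rfl, rfl, hve⟩ | ⟨v, e, rfl, rfl, hve⟩)
    · intro hRa
      exact fun u hu => key2 e.1 e.2 (key v hRa e.1 e.2 hve) u hu
    · intro hRa
      exact hRa v hve
  have hreach : ∀ (a b : V ⊕ {e // e ∈ E}) (w : (hIncGraph E).Walk a b), R a → R b := by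
    intro a b w
    induction w with
    | nil => exact id
    | cons h p ih => exact fun hRa => ih (hstep _ _ h hRa)
  obtain ⟨v0, -, hv0⟩ := Finset.exists_mem_eq_sup' Finset.univ_nonempty (fun v => |x v|)
  have hall : ∀ v : V, |x v| = m := by
    intro v
    obtain ⟨w⟩ := (show (hIncGraph E).Connected from hconn).preconnected
      (Sum.inl v0) (Sum.inl v)
    exact hreach _ _ w (by simpa [R] using hv0.symm)
  -- conclude
  refine ⟨fun v => x v / m, ?_, ?_⟩
  · intro v
    rcases abs_eq (le_of_lt hmpos) |>.mp (hall v) with h | h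
    · left; show x v / m = 1; rw [h]; field_simp
    · right; show x v / m = -1; rw [h]; field_simp
  · intro e heE
    have hkpos : 0 < e.card := by rw [hE e heE]; exact k.pos_of_neZero
    obtain ⟨v, hv⟩ := Finset.card_pos.mp hkpos
    have hkey := key v (hall v) e heE hv
    have hprods : ∏ u ∈ e, (x u / m) = (∏ u ∈ e, x u) / m ^ k := by
      rw [Finset.prod_div_distrib, Finset.prod_const, hE e heE]
    rw [hprods]
    have hm0 : (m : ℝ) ≠ 0 := ne_of_gt hmpos
    field_simp
    linarith [hkey]

end SwitchHelpers

/-- for a connected `k`-uniform oriented hypergraph `G^σ` with `k` even, the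
following are equivalent: (a) `ΓG^σ` is switching equivalent to `ΓG⁺`;
(b) `S A(ΓG^σ) S = -A(G)` for some signature matrix `S`;
(c) `S L(ΓG^σ) S = L(G) = D(G) - A(G)` for some signature matrix `S`;
(d) `0` is an H-eigenvalue of `L(ΓG^σ)`. -/
theorem induced_switchEquiv_plus_tfae [Fintype V] [DecidableEq V]
    (k : ℕ) [NeZero k] (hk : Even k) (E : Finset (Finset V)) (hE : ∀ e ∈ E, e.card = k)
    (hconn : HConnectedF E) (σ : Finset V → V → ℝ) (hσ : IsIncidenceOrientation E σ) :
    (SignedSwitchEquiv E (inducedSign k σ) (fun _ => (-1 : ℝ) ^ (k - 1)) ↔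
      ∃ S : V → ℝ, (∀ v, S v = 1 ∨ S v = -1) ∧
        conjT ℝ k S (adjT ℝ k E (inducedSign k σ)) =
          fun i => -(adjT ℝ k E (fun _ => 1) i)) ∧
    (SignedSwitchEquiv E (inducedSign k σ) (fun _ => (-1 : ℝ) ^ (k - 1)) ↔
      ∃ S : V → ℝ, (∀ v, S v = 1 ∨ S v = -1) ∧
        conjT ℝ k S (lapT k E (inducedSign k σ)) =
          fun i => degT k E i - adjT ℝ k E (fun _ => 1) i) ∧
    (SignedSwitchEquiv E (inducedSign k σ) (fun _ => (-1 : ℝ) ^ (k - 1)) ↔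
      ∃ x : V → ℝ, IsTensorEigenpair ℝ k (lapT k E (inducedSign k σ)) 0 x) := by
    classical
  have hodd : Odd (k - 1) := Nat.Even.sub_odd NeZero.one_le hk odd_one
  have hneg : ((-1 : ℝ)) ^ (k - 1) = -1 := Odd.neg_one_pow hodd
  set γ := inducedSign k σ with hγ
  have habs : ∀ e ∈ E, |γ e| = 1 := by
    intro e he
    rw [hγ]
    show |(-1 : ℝ) ^ (k - 1) * ∏ v ∈ e, σ e v| = 1
    rw [abs_mul, abs_pow, abs_neg, abs_one, one_pow, one_mul, Finset.abs_prod]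
    exact Finset.prod_eq_one fun v hv => by
      rcases hσ e he v hv with h | h <;> rw [h] <;> norm_num
  have hPA : SignedSwitchEquiv E γ (fun _ => (-1 : ℝ) ^ (k - 1)) ↔
      ∃ S : V → ℝ, (∀ v, S v = 1 ∨ S v = -1) ∧ ∀ e ∈ E, γ e * ∏ v ∈ e, S v = -1 := by
    rw [switchEquiv_iff_sign]
    refine exists_congr fun S => and_congr_right fun hS => ?_
    constructor
    · intro h e he
      rw [← h e he]
      exact hneg
    · intro h e he
      rw [h e he]
      exact hneg
  have hPB : (∃ S : V → ℝ, (∀ v, S v = 1 ∨ S v = -1) ∧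
        conjT ℝ k S (adjT ℝ k E γ) = fun i => -(adjT ℝ k E (fun _ => 1) i)) ↔
      ∃ S : V → ℝ, (∀ v, S v = 1 ∨ S v = -1) ∧ ∀ e ∈ E, γ e * ∏ v ∈ e, S v = -1 :=
    exists_congr fun S => and_congr_right fun hS => conjT_adj_eq_iff k E hE γ S hS
  have hPC : (∃ S : V → ℝ, (∀ v, S v = 1 ∨ S v = -1) ∧
        conjT ℝ k S (lapT k E γ) = fun i => degT k E i - adjT ℝ k E (fun _ => 1) i) ↔
      ∃ S : V → ℝ, (∀ v, S v = 1 ∨ S v = -1) ∧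
        conjT ℝ k S (adjT ℝ k E γ) = fun i => -(adjT ℝ k E (fun _ => 1) i) :=
    exists_congr fun S => and_congr_right fun hS => conjT_lap_eq_iff k hk E γ S hS
  have hPD : (∃ x : V → ℝ, IsTensorEigenpair ℝ k (lapT k E γ) 0 x) ↔
      ∃ S : V → ℝ, (∀ v, S v = 1 ∨ S v = -1) ∧ ∀ e ∈ E, γ e * ∏ v ∈ e, S v = -1 := by
    constructor
    · rintro ⟨x, hx⟩
      exact eig_to_sign k hk E hE hconn γ habs x hx
    · rintro ⟨S, hS, hP⟩
      exact ⟨S, sign_to_eig k hk E hE hconn γ S hS hP⟩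
  exact ⟨hPA.trans hPB.symm, hPA.trans (hPC.trans hPB).symm, hPA.trans hPD.symm⟩
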